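/- Let (R, α) be a multiplicative Hom-Lie conformal superalgebra. Then [QDer(R)_λ QC(R)] ⊆ QC(R)[λ]: for any homogeneous D ∈ QDer_{α^k}(R) and D' ∈ QC_{α^s}(R), the commutator [D_λ D'] is an α^{k+s}-quasicentroid of R with polynomial coefficients in λ. -/

import Mathlib

noncomputable section

namespace HLCS

open scoped BigOperators

/-- Evaluation at `l : ℂ` of a polynomial (in `λ`) with coefficients in `M`,
encoded as a finitely supported family of coefficients. -/
def pev {M : Type} [AddCommGroup M] [Module ℂ M] (l : ℂ) (p : ℕ →₀ M) : M :=
  p.sum fun n r => l ^ n • r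

/-- Evaluation of a polynomial with coefficients in `M` at an operator `T`
(used for substitutions such as `-λ - ∂`). -/
def pevOp {M : Type} [AddCommGroup M] [Module ℂ M] (T : Module.End ℂ M) (p : ℕ →₀ M) : M :=
  p.sum fun n r => (T ^ n) r

/-- The super sign `(-1)^{|a||b|}` attached to parities `i`, `j`. -/
def sg (i j : ZMod 2) : ℂ := (-1 : ℂ) ^ (i * j).val

/-- The data of a `ℤ₂`-graded `ℂ[∂]`-module `R` with an endomorphism `α` and a
`ℂ`-bilinear `λ`-bracket with values in `ℂ[λ] ⊗ R` (encoded by its coefficients). -/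
structure Data (R : Type) [AddCommGroup R] [Module ℂ R] where
  der : Module.End ℂ R
  alpha : Module.End ℂ R
  G : ZMod 2 → Submodule ℂ R
  br : R →ₗ[ℂ] R →ₗ[ℂ] (ℕ →₀ R)

namespace Data

variable {R : Type} [AddCommGroup R] [Module ℂ R] (S : Data R)

/-- `[a_λ b]` evaluated at `λ = l`. -/
def lb (l : ℂ) (a b : R) : R := pev l (S.br a b)

/-- `[a_{-l-∂} b]` : the bracket with `-l - ∂` substituted for `λ`. -/
def lbOp (l : ℂ) (a b : R) : R :=
  pevOp ((-l) • (1 : Module.End ℂ R) - S.der) (S.br a b)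

/-- Multiplicativity: `α [a_λ b] = [α(a)_λ α(b)]`. -/
def Mult : Prop := ∀ (l : ℂ) (a b : R), S.alpha (S.lb l a b) = S.lb l (S.alpha a) (S.alpha b)

end Data

variable {R : Type} [AddCommGroup R] [Module ℂ R]

/-- `(R, α)` with the given data is a Hom-Lie conformal superalgebra.
All polynomial identities in `λ, μ` are stated by evaluating at arbitrary
complex numbers (which is equivalent, `ℂ` being infinite). -/
structure IsHLCS (S : Data R) : Prop where
  internal : DirectSum.IsInternal S.G
  der_even : ∀ i, ∀ a ∈ S.G i, S.der a ∈ S.G i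
  alpha_even : ∀ i, ∀ a ∈ S.G i, S.alpha a ∈ S.G i
  alpha_der : ∀ a, S.alpha (S.der a) = S.der (S.alpha a)
  br_grade : ∀ i j, ∀ a ∈ S.G i, ∀ b ∈ S.G j, ∀ n, S.br a b n ∈ S.G (i + j)
  conf_left : ∀ (l : ℂ) (a b : R), S.lb l (S.der a) b = -l • S.lb l a b
  conf_right : ∀ (l : ℂ) (a b : R), S.lb l a (S.der b) = S.der (S.lb l a b) + l • S.lb l a b
  skew : ∀ i j, ∀ a ∈ S.G i, ∀ b ∈ S.G j, ∀ l : ℂ,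
    S.lb l a b = (-sg i j) • S.lbOp l b a
  jacobi : ∀ i j, ∀ a ∈ S.G i, ∀ b ∈ S.G j, ∀ (c : R) (l m : ℂ),
    S.lb l (S.alpha a) (S.lb m b c) =
      S.lb (l + m) (S.lb l a b) (S.alpha c) + sg i j • S.lb m (S.alpha b) (S.lb l a c)

end HLCS
namespace HLCS

variable {R : Type} [AddCommGroup R] [Module ℂ R]

/-- A homogeneous conformal linear map of parity `d` on `R`, encoded as the family of
its evaluations `F l : R → R` (`l : ℂ`): it is `ℂ`-linear, polynomial in `l`, and
satisfies `F_λ(∂a) = (∂ + λ) F_λ(a)`. -/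
structure IsConfMap (S : Data R) (d : ZMod 2) (F : ℂ → R → R) : Prop where
  map_add : ∀ (l : ℂ) (a b : R), F l (a + b) = F l a + F l b
  map_smul : ∀ (l c : ℂ) (a : R), F l (c • a) = c • F l a
  poly : ∀ a : R, ∃ p : ℕ →₀ R, ∀ l : ℂ, F l a = pev l p
  conf : ∀ (l : ℂ) (a : R), F l (S.der a) = S.der (F l a) + l • F l a
  grade : ∀ i, ∀ a ∈ S.G i, ∀ l : ℂ, F l a ∈ S.G (i + d)

/-- Membership in `Ω`: a homogeneous conformal linear map commuting with `α`. -/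
def InOmega (S : Data R) (d : ZMod 2) (F : ℂ → R → R) : Prop :=
  IsConfMap S d F ∧ ∀ (l : ℂ) (a : R), F l (S.alpha a) = S.alpha (F l a)

/-- An `α^k`-derivation of parity `d`. -/
def IsDer (S : Data R) (k : ℕ) (d : ZMod 2) (F : ℂ → R → R) : Prop :=
  InOmega S d F ∧ ∀ i, ∀ a ∈ S.G i, ∀ (b : R) (l m : ℂ),
    F l (S.lb m a b) =
      S.lb (l + m) (F l a) ((S.alpha ^ k) b) +
        ((-1 : ℂ) ^ ((i * d).val)) • S.lb m ((S.alpha ^ k) a) (F l b)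

/-- The commutator `[D_λ D']_μ (a) = D_λ(D'_{μ-λ}(a)) - (-1)^{|D||D'|} D'_{μ-λ}(D_λ(a))`,
with `e = (-1)^{|D||D'|}`; first argument `l` is `λ`, second `m` is `μ`. -/
def brkt (e : ℂ) (F G : ℂ → R → R) : ℂ → ℂ → R → R :=
  fun l m a => F l (G (m - l) a) - e • G (m - l) (F l a)

/-- The twist `α'(D) = D ∘ α`. -/
def tw (S : Data R) (F : ℂ → R → R) : ℂ → R → R := fun l a => F l (S.alpha a)

/-- A generalized `α^k`-derivation of parity `d`. -/
def IsGDer (S : Data R) (k : ℕ) (d : ZMod 2) (F : ℂ → R → R) : Prop :=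
  InOmega S d F ∧ ∃ F' F'' : ℂ → R → R, InOmega S d F' ∧ InOmega S d F'' ∧
    ∀ i, ∀ a ∈ S.G i, ∀ (b : R) (l m : ℂ),
      S.lb (l + m) (F m a) ((S.alpha ^ k) b) +
        ((-1 : ℂ) ^ ((d * i).val)) • S.lb l ((S.alpha ^ k) a) (F' m b) = F'' m (S.lb l a b)

/-- An `α^k`-quasiderivation of parity `d`. -/
def IsQDer (S : Data R) (k : ℕ) (d : ZMod 2) (F : ℂ → R → R) : Prop :=
  InOmega S d F ∧ ∃ F' : ℂ → R → R, InOmega S d F' ∧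
    ∀ i, ∀ a ∈ S.G i, ∀ (b : R) (l m : ℂ),
      S.lb (l + m) (F m a) ((S.alpha ^ k) b) +
        ((-1 : ℂ) ^ ((d * i).val)) • S.lb l ((S.alpha ^ k) a) (F m b) = F' m (S.lb l a b)

/-- An `α^k`-centroid of parity `d`. -/
def IsCent (S : Data R) (k : ℕ) (d : ZMod 2) (F : ℂ → R → R) : Prop :=
  InOmega S d F ∧ ∀ i, ∀ a ∈ S.G i, ∀ (b : R) (l m : ℂ),
    S.lb (l + m) (F m a) ((S.alpha ^ k) b) =
      ((-1 : ℂ) ^ ((d * i).val)) • S.lb l ((S.alpha ^ k) a) (F m b) ∧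
    S.lb (l + m) (F m a) ((S.alpha ^ k) b) = F m (S.lb l a b)

/-- An `α^k`-quasicentroid of parity `d`. -/
def IsQC (S : Data R) (k : ℕ) (d : ZMod 2) (F : ℂ → R → R) : Prop :=
  InOmega S d F ∧ ∀ i, ∀ a ∈ S.G i, ∀ (b : R) (l m : ℂ),
    S.lb (l + m) (F m a) ((S.alpha ^ k) b) =
      ((-1 : ℂ) ^ ((d * i).val)) • S.lb l ((S.alpha ^ k) a) (F m b)

/-- An `α^k`-central derivation of parity `d`. -/
def IsZDer (S : Data R) (k : ℕ) (d : ZMod 2) (F : ℂ → R → R) : Prop :=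
  InOmega S d F ∧ ∀ (a b : R) (l m : ℂ),
    S.lb (l + m) (F m a) ((S.alpha ^ k) b) = 0 ∧ F m (S.lb l a b) = 0

/-- Membership in the center `Z(R)`. -/
def IsCentral (S : Data R) (x : R) : Prop := ∀ (l : ℂ) (y : R), S.lb l x y = 0

end HLCS
namespace HLCS

variable {R : Type} [AddCommGroup R] [Module ℂ R]


section Aux

open Finsupp

lemma pev_single' (l : ℂ) (n : ℕ) (r : R) : pev l (Finsupp.single n r) = l^n • r := by
  simp [pev, Finsupp.sum_single_index]

lemma pev_add' (l : ℂ) (p q : ℕ →₀ R) : pev l (p + q) = pev l p + pev l q := by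
  simp [pev, Finsupp.sum_add_index, smul_add]

lemma pev_smul' (l c : ℂ) (p : ℕ →₀ R) : pev l (c • p) = c • pev l p := by
  rw [pev, Finsupp.sum_smul_index' (fun n => by simp), pev, Finsupp.smul_sum]
  exact Finsupp.sum_congr fun n _ => (smul_comm _ _ _)

/-- The span of monomial functions `m ↦ m^n • r`. -/
def PSpan (R : Type) [AddCommGroup R] [Module ℂ R] : Submodule ℂ (ℂ → R) :=
  Submodule.span ℂ {f | ∃ n : ℕ, ∃ r : R, f = fun m => m ^ n • r}

lemma poly_iff (f : ℂ → R) : (∃ p : ℕ →₀ R, ∀ m, f m = pev m p) ↔ f ∈ PSpan R := by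
  constructor
  · rintro ⟨p, hp⟩
    have : f = ∑ n ∈ p.support, (fun m => m ^ n • p n) := by
      funext m
      rw [hp m, pev, Finsupp.sum, Finset.sum_apply]
    rw [this]
    exact Submodule.sum_mem _ fun n _ => Submodule.subset_span ⟨n, p n, rfl⟩
  · intro hf
    induction hf using Submodule.span_induction with
    | mem g hg =>
        obtain ⟨n, r, rfl⟩ := hg
        exact ⟨Finsupp.single n r, fun m => (pev_single' m n r).symm⟩
    | zero => exact ⟨0, by simp [pev]⟩
    | add g h _ _ ihg ihh =>
        obtain ⟨p, hp⟩ := ihg; obtain ⟨q, hq⟩ := ihh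
        exact ⟨p + q, fun m => by simp [pev_add', hp m, hq m]⟩
    | smul c g _ ihg =>
        obtain ⟨p, hp⟩ := ihg
        exact ⟨c • p, fun m => by simp [pev_smul', hp m]⟩

lemma PSpan_map (T : R →ₗ[ℂ] R) {f : ℂ → R} (hf : f ∈ PSpan R) : (fun m => T (f m)) ∈ PSpan R := by
  induction hf using Submodule.span_induction with
  | mem g hg =>
      obtain ⟨n, r, rfl⟩ := hg
      exact Submodule.subset_span ⟨n, T r, by funext m; simp⟩
  | zero =>
      have : (fun _ : ℂ => (0:R)) = (0 : ℂ → R) := rfl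
      simp only [map_zero, Pi.zero_apply, this]
      exact (PSpan R).zero_mem
  | add g h _ _ ihg ihh =>
      have := (PSpan R).add_mem ihg ihh
      simp only [Pi.add_apply, map_add]
      exact this
  | smul c g _ ihg =>
      have : (fun m => T ((c • g) m)) = c • fun m => T (g m) := by funext m; simp
      rw [this]; exact (PSpan R).smul_mem c ihg

lemma PSpan_shift (l : ℂ) {f : ℂ → R} (hf : f ∈ PSpan R) : (fun m => f (m - l)) ∈ PSpan R := by
  induction hf using Submodule.span_induction with
  | mem g hg =>
      obtain ⟨n, r, rfl⟩ := hg
      have : (fun m : ℂ => (m - l) ^ n • r)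
          = ∑ j ∈ Finset.range (n+1),
              fun m : ℂ => m ^ j • (((-l) ^ (n-j) * (n.choose j : ℂ)) • r) := by
        funext m
        rw [Finset.sum_apply]
        rw [show m - l = m + (-l) from by ring, add_pow]
        rw [Finset.sum_smul]
        exact Finset.sum_congr rfl fun j _ => by rw [smul_smul]; ring_nf
      rw [this]
      exact Submodule.sum_mem _ fun j _ => Submodule.subset_span ⟨j, _, rfl⟩
  | zero =>
      have : (fun _ : ℂ => (0 : ℂ → R) 0) = (0 : ℂ → R) := rfl
      exact this ▸ (PSpan R).zero_mem
  | add g h _ _ ihg ihh =>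
      have : (fun m => (g + h) (m - l)) = (fun m => g (m - l)) + (fun m => h (m - l)) := rfl
      rw [this]; exact (PSpan R).add_mem ihg ihh
  | smul c g _ ihg =>
      have : (fun m => (c • g) (m - l)) = c • (fun m => g (m - l)) := rfl
      rw [this]; exact (PSpan R).smul_mem c ihg

lemma sgnA (d d' i : ZMod 2) :
    ((-1:ℂ))^((d*(i+d')).val) = (-1)^((d*i).val) * (-1)^((d*d').val) := by
  fin_cases d <;> fin_cases d' <;> fin_cases i <;>
    simp +decide [show ((2:ZMod 2)).val = 0 from rfl, show ((1:ZMod 2)).val = 1 from rfl,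
      show ((0:ZMod 2)).val = 0 from rfl]

lemma sgnB (d d' i : ZMod 2) :
    ((-1:ℂ))^((d'*(i+d)).val) = (-1)^((d'*i).val) * (-1)^((d*d').val) := by
  fin_cases d <;> fin_cases d' <;> fin_cases i <;>
    simp +decide [show ((2:ZMod 2)).val = 0 from rfl, show ((1:ZMod 2)).val = 1 from rfl,
      show ((0:ZMod 2)).val = 0 from rfl]

lemma sgnC (d d' i : ZMod 2) :
    ((-1:ℂ))^(((d+d')*i).val) = (-1)^((d*i).val) * (-1)^((d'*i).val) := by
  fin_cases d <;> fin_cases d' <;> fin_cases i <;>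
    simp +decide [show ((2:ZMod 2)).val = 0 from rfl, show ((1:ZMod 2)).val = 1 from rfl,
      show ((0:ZMod 2)).val = 0 from rfl]

lemma sgn_sq' (x : ZMod 2) : ((-1:ℂ))^(x.val) * (-1)^(x.val) = 1 := by
  fin_cases x <;> simp +decide [show ((1:ZMod 2)).val = 1 from rfl, show ((0:ZMod 2)).val = 0 from rfl]

variable (S : Data R)

lemma lb_add_left (l : ℂ) (a b c : R) : S.lb l (a + b) c = S.lb l a c + S.lb l b c := by
  simp [Data.lb, map_add, pev_add']

lemma lb_add_right (l : ℂ) (a b c : R) : S.lb l a (b + c) = S.lb l a b + S.lb l a c := by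
  simp [Data.lb, map_add, pev_add']

lemma lb_smul_left (l c : ℂ) (a b : R) : S.lb l (c • a) b = c • S.lb l a b := by
  simp [Data.lb, map_smul, pev_smul']

lemma lb_smul_right (l c : ℂ) (a b : R) : S.lb l a (c • b) = c • S.lb l a b := by
  simp [Data.lb, map_smul, pev_smul']

lemma pev_sub' (l : ℂ) (p q : ℕ →₀ R) : pev l (p - q) = pev l p - pev l q := by
  rw [sub_eq_add_neg, pev_add', show (-q : ℕ →₀ R) = (-1 : ℂ) • q by module, pev_smul']
  module

lemma lb_sub_left (l : ℂ) (a b c : R) : S.lb l (a - b) c = S.lb l a c - S.lb l b c := by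
  simp [Data.lb, map_sub, pev_sub']

lemma lb_sub_right (l : ℂ) (a b c : R) : S.lb l a (b - c) = S.lb l a b - S.lb l a c := by
  rw [sub_eq_add_neg, lb_add_right, show (-c : R) = (-1 : ℂ) • c by module, lb_smul_right]
  module

lemma pow_mem (halpha : ∀ i, ∀ a ∈ S.G i, S.alpha a ∈ S.G i) (k : ℕ) (i : ZMod 2) (a : R)
    (ha : a ∈ S.G i) : (S.alpha ^ k) a ∈ S.G i := by
  induction k with
  | zero => simpa using ha
  | succ n ih =>
      rw [pow_succ', Module.End.mul_apply]
      exact halpha i _ ih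

lemma comm_pow {F : ℂ → R → R} (hcomm : ∀ l a, F l (S.alpha a) = S.alpha (F l a)) (k : ℕ)
    (l : ℂ) (a : R) : F l ((S.alpha ^ k) a) = (S.alpha ^ k) (F l a) := by
  induction k generalizing a with
  | zero => simp
  | succ n ih =>
      rw [pow_succ, Module.End.mul_apply, ih (S.alpha a), hcomm, ← Module.End.mul_apply,
        ← pow_succ, pow_succ', Module.End.mul_apply, ← Module.End.mul_apply, ← pow_succ']

lemma pow_add_apply1 (k s : ℕ) (x : R) : (S.alpha ^ (k + s)) x = (S.alpha ^ k) ((S.alpha ^ s) x) := by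
  rw [pow_add]; rfl

lemma pow_add_apply2 (k s : ℕ) (x : R) : (S.alpha ^ (k + s)) x = (S.alpha ^ s) ((S.alpha ^ k) x) := by
  rw [show k + s = s + k from add_comm k s, pow_add]; rfl

end Aux

/-- For a multiplicative Hom-Lie conformal superalgebra `(R, α)`,
`[QDer(R)_λ QC(R)] ⊆ QC(R)[λ]`: the commutator of a homogeneous
`α^k`-quasiderivation with a homogeneous `α^s`-quasicentroid is an
`α^{k+s}`-quasicentroid (with polynomial coefficients in `λ`). -/
theorem qder_bracket_qc (S : Data R) (hS : IsHLCS S) (hmult : S.Mult)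
    (k s : ℕ) (d d' : ZMod 2) (F G : ℂ → R → R)
    (hF : IsQDer S k d F) (hG : IsQC S s d' G) :
    ∀ l : ℂ, IsQC S (k + s) (d + d') (brkt ((-1 : ℂ) ^ ((d * d').val)) F G l) := by
  obtain ⟨⟨hFc, hFa⟩, F', ⟨hF'c, hF'a⟩, hFid⟩ := hF
  obtain ⟨⟨hGc, hGa⟩, hGid⟩ := hG
  intro l
  have Flin : R →ₗ[ℂ] R := ⟨⟨F l, hFc.map_add l⟩, hFc.map_smul l⟩
  have cF : ∀ (t : ℂ) (x : R), F t ((S.alpha ^ s) x) = (S.alpha ^ s) (F t x) :=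
    fun t x => comm_pow S hFa s t x
  have cG : ∀ (t : ℂ) (x : R), G t ((S.alpha ^ k) x) = (S.alpha ^ k) (G t x) :=
    fun t x => comm_pow S hGa k t x
  constructor
  · constructor
    · constructor
      · intro m x y
        simp only [brkt, hFc.map_add, hGc.map_add, smul_add]
        abel
      · intro m c x
        simp only [brkt, hFc.map_smul, hGc.map_smul]
        rw [smul_comm ((-1 : ℂ) ^ ((d * d').val)) c]
        module
      · intro x
        have hg1 : (fun m => G m x) ∈ PSpan R := (poly_iff _).mp (hGc.poly x)
        have hg2 : (fun m => G m (F l x)) ∈ PSpan R := (poly_iff _).mp (hGc.poly (F l x))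
        have h1 : (fun m => F l (G (m - l) x)) ∈ PSpan R := by
          have := PSpan_map (⟨⟨F l, hFc.map_add l⟩, hFc.map_smul l⟩ : R →ₗ[ℂ] R)
            (PSpan_shift l hg1)
          exact this
        have h2 : (fun m => G (m - l) (F l x)) ∈ PSpan R := PSpan_shift l hg2
        have := (PSpan R).sub_mem h1 ((PSpan R).smul_mem ((-1 : ℂ) ^ ((d * d').val)) h2)
        have heq : (fun m => brkt ((-1 : ℂ) ^ ((d * d').val)) F G l m x)
            = (fun m => F l (G (m - l) x))
              - ((-1 : ℂ) ^ ((d * d').val)) • (fun m => G (m - l) (F l x)) := rfl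
        rw [← heq] at this
        exact (poly_iff _).mpr this
      · intro m x
        show F l (G (m - l) (S.der x)) - _ • G (m - l) (F l (S.der x)) = _
        have h1 : F l (G (m - l) (S.der x))
            = S.der (F l (G (m - l) x)) + l • F l (G (m - l) x)
              + (m - l) • F l (G (m - l) x) := by
          rw [hGc.conf, hFc.map_add, hFc.map_smul, hFc.conf]
        have h2 : G (m - l) (F l (S.der x))
            = S.der (G (m - l) (F l x)) + (m - l) • G (m - l) (F l x)
              + l • G (m - l) (F l x) := by
          rw [hFc.conf, hGc.map_add, hGc.map_smul, hGc.conf]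
        rw [h1, h2]
        simp only [brkt, map_sub, map_smul]
        module
      · intro i x hx m
        show F l (G (m - l) x) - _ • G (m - l) (F l x) ∈ _
        have h1 : F l (G (m - l) x) ∈ S.G (i + (d + d')) := by
          have := hFc.grade (i + d') _ (hGc.grade i x hx (m - l)) l
          rwa [show i + d' + d = i + (d + d') from by ring] at this
        have h2 : G (m - l) (F l x) ∈ S.G (i + (d + d')) := by
          have := hGc.grade (i + d) _ (hFc.grade i x hx l) (m - l)
          rwa [show i + d + d' = i + (d + d') from by ring] at this
        exact Submodule.sub_mem _ h1 (Submodule.smul_mem _ _ h2)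
    · intro m x
      show F l (G (m - l) (S.alpha x)) - _ • G (m - l) (F l (S.alpha x))
        = S.alpha (F l (G (m - l) x) - _ • G (m - l) (F l x))
      simp only [hGa, hFa, map_sub, map_smul]
  · intro i a ha b u m
    have haK : (S.alpha ^ k) a ∈ S.G i := pow_mem S hS.alpha_even k i a ha
    have haS : (S.alpha ^ s) a ∈ S.G i := pow_mem S hS.alpha_even s i a ha
    -- the quasicentroid identities for G
    have hB1 := hGid i a ha b u (m - l)
    have hB2 := hGid i ((S.alpha ^ k) a) haK (F l b) u (m - l)
    rw [← pow_add_apply2 S k s a] at hB2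
    have hB3 := hGid (i + d) (F l a) (hFc.grade i a ha l) ((S.alpha ^ k) b) (u + l) (m - l)
    rw [show u + l + (m - l) = u + m from by ring, ← pow_add_apply2 S k s b, sgnB d d' i] at hB3
    -- the quasiderivation identity, second application
    have hC := hFid i ((S.alpha ^ s) a) haS (G (m - l) b) u l
    rw [cF l a, ← cG (m - l) b, ← pow_add_apply1 S k s a] at hC
    -- the quasiderivation identity, first application
    have hA := hFid (i + d') (G (m - l) a) (hGc.grade i a ha (m - l)) ((S.alpha ^ s) b)
      (u + (m - l)) l
    rw [show u + (m - l) + l = u + m from by ring, ← pow_add_apply1 S k s b, ← cG (m - l) a,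
      cF l b, sgnA d d' i, hB1, hF'c.map_smul, ← hC, hB2] at hA
    have E1 := eq_sub_of_add_eq hA
    -- now expand the goal
    show S.lb (u + m) (F l (G (m - l) a) - _ • G (m - l) (F l a)) ((S.alpha ^ (k + s)) b)
      = _ • S.lb u ((S.alpha ^ (k + s)) a) (F l (G (m - l) b) - _ • G (m - l) (F l b))
    rw [lb_sub_left, lb_sub_right, lb_smul_left, lb_smul_right, sgnC d d' i, E1, hB3]
    have sq : (-1 : ℂ) ^ ((d * d').val) * (-1 : ℂ) ^ ((d * d').val) = 1 := sgn_sq' _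
    match_scalars
    · linear_combination (-((-1 : ℂ) ^ ((d' * i).val))) * sq
    · ring
    · ring

end HLCS
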